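/- Gradient flow structure for the hereditary-integral viscoelastic model (Remark 3.3(i)): let α ≥ 1, and let (u, φ) : [0, T] → X × Ψ be continuously differentiable with u(t) ∈ g + V for all t, satisfying for all t ∈ (0, T): (a) ⟪C(e u(t) − φ(t)), e v⟫_Ψ = ℓ(v) for all v ∈ V, and (b) φ'(t) + α φ(t) = e u(t) in Ψ. Then for every t ∈ (0, T) and every ψ ∈ Ψ, ⟪C φ'(t), ψ⟫_Ψ = −(∂Ẽ_*)(φ(t))[ψ]. -/
import Mathlib


open scoped RealInnerProductSpace

/-- Gradient flow structure for the hereditary-integral viscoelastic model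
(Remark 3.3(i)): for `α ≥ 1` and a C¹ solution `(u, φ)` of the model
`⟪C(e u − φ), e v⟫ = ℓ(v)` (`v ∈ V`), `φ' + αφ = e u`, one has
`⟪C φ'(t), ψ⟫ = −(∂Ẽ_*)(φ(t))[ψ]`. -/
theorem stmt_16
    {X Ψ : Type*}
    [NormedAddCommGroup X] [InnerProductSpace ℝ X] [CompleteSpace X]
    [NormedAddCommGroup Ψ] [InnerProductSpace ℝ Ψ] [CompleteSpace Ψ]
    (V : Submodule ℝ X) (hV : IsClosed (V : Set X))
    (e : X →L[ℝ] Ψ) (C : Ψ →L[ℝ] Ψ)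
    (hCsym : ∀ φ ψ : Ψ, ⟪C φ, ψ⟫ = ⟪φ, C ψ⟫)
    (cstar : ℝ) (hcstar : 0 < cstar)
    (hCcoer : ∀ ψ : Ψ, cstar * ‖ψ‖ ^ 2 ≤ ⟪C ψ, ψ⟫)
    (c₀ : ℝ) (hc₀ : 0 < c₀)
    (hacoer : ∀ v ∈ V, c₀ * ‖v‖ ^ 2 ≤ ⟪C (e v), e v⟫)
    (ℓ : X →L[ℝ] ℝ) (g : X) (α : ℝ) (hα : 1 ≤ α)
    (Et : X → Ψ → ℝ)
    (hEt : ∀ u φ, Et u φ =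
      (1 / 2) * ⟪C (e u - φ), e u - φ⟫ + ((α - 1) / 2) * ⟪C φ, φ⟫ - ℓ u)
    (ubar : Ψ → X)
    (hubar_mem : ∀ φ : Ψ, ubar φ - g ∈ V)
    (hubar_weak : ∀ φ : Ψ, ∀ v ∈ V, ⟪C (e (ubar φ) - φ), e v⟫ = ℓ v)
    (hubar_min : ∀ φ : Ψ, ∀ v : X, v - g ∈ V → Et (ubar φ) φ ≤ Et v φ)
    (Etstar : Ψ → ℝ)
    (hEtstar : ∀ φ : Ψ, Etstar φ = Et (ubar φ) φ)
    (T : ℝ) (hT : 0 < T)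
    (u : ℝ → X) (φ : ℝ → Ψ) (u' : ℝ → X) (φ' : ℝ → Ψ)
    (hu_deriv : ∀ t ∈ Set.Icc (0 : ℝ) T, HasDerivAt u (u' t) t)
    (hφ_deriv : ∀ t ∈ Set.Icc (0 : ℝ) T, HasDerivAt φ (φ' t) t)
    (hu'_cont : ContinuousOn u' (Set.Icc (0 : ℝ) T))
    (hφ'_cont : ContinuousOn φ' (Set.Icc (0 : ℝ) T))
    (hu_mem : ∀ t ∈ Set.Icc (0 : ℝ) T, u t - g ∈ V)
    (heq1 : ∀ t ∈ Set.Ioo (0 : ℝ) T, ∀ v ∈ V, ⟪C (e (u t) - φ t), e v⟫ = ℓ v)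
    (heq2 : ∀ t ∈ Set.Ioo (0 : ℝ) T, φ' t + α • φ t = e (u t)) :
    ∀ t ∈ Set.Ioo (0 : ℝ) T, ∀ ψ : Ψ,
      HasDerivAt (fun ε : ℝ => Etstar (φ t + ε • ψ)) (-⟪C (φ' t), ψ⟫) 0 := by
  intro t ht ψ
  -- uniqueness of solutions of the variational problem
  have uniq : ∀ (χ : Ψ) (u₁ u₂ : X), u₁ - g ∈ V → u₂ - g ∈ V →
      (∀ v ∈ V, ⟪C (e u₁ - χ), e v⟫ = ℓ v) →
      (∀ v ∈ V, ⟪C (e u₂ - χ), e v⟫ = ℓ v) → u₁ = u₂ := by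
    intro χ u₁ u₂ h1 h2 he1 he2
    have hz : u₁ - u₂ ∈ V := by
      have := V.sub_mem h1 h2
      simpa [sub_sub_sub_cancel_right] using this
    have h0 : ⟪C (e (u₁ - u₂)), e (u₁ - u₂)⟫ = 0 := by
      have hsub : ⟪C (e u₁ - χ) - C (e u₂ - χ), e (u₁ - u₂)⟫ = 0 := by
        rw [inner_sub_left, he1 _ hz, he2 _ hz, sub_self]
      have hCeq : C (e u₁ - χ) - C (e u₂ - χ) = C (e (u₁ - u₂)) := by
        rw [map_sub e, ← map_sub C]
        congr 1
        abel
      rwa [hCeq] at hsub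
    have hco := hacoer _ hz
    have hn : ‖u₁ - u₂‖ ^ 2 ≤ 0 := by nlinarith
    have : u₁ - u₂ = 0 := by
      have := sq_nonneg ‖u₁ - u₂‖
      have hn0 : ‖u₁ - u₂‖ = 0 := by nlinarith
      exact norm_eq_zero.mp hn0
    exact sub_eq_zero.mp this
  have htIcc : t ∈ Set.Icc (0 : ℝ) T := ⟨le_of_lt ht.1, le_of_lt ht.2⟩
  -- the minimizer at φ t is u t
  have hu0 : ubar (φ t) = u t :=
    uniq (φ t) _ _ (hubar_mem _) (hu_mem t htIcc) (hubar_weak _) (heq1 t ht)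
  set d : X := ubar (φ t + ψ) - ubar (φ t) with hd_def
  have hd_mem : d ∈ V := by
    have := V.sub_mem (hubar_mem (φ t + ψ)) (hubar_mem (φ t))
    simpa [hd_def, sub_sub_sub_cancel_right] using this
  have hd_weak : ∀ v ∈ V, ⟪C (e d - ψ), e v⟫ = 0 := by
    intro v hv
    have hsub : ⟪C (e (ubar (φ t + ψ)) - (φ t + ψ)) - C (e (ubar (φ t)) - φ t), e v⟫ = 0 := by
      rw [inner_sub_left, hubar_weak (φ t + ψ) v hv, hubar_weak (φ t) v hv, sub_self]
    have hCeq : C (e (ubar (φ t + ψ)) - (φ t + ψ)) - C (e (ubar (φ t)) - φ t)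
        = C (e d - ψ) := by
      rw [← map_sub C]
      congr 1
      rw [hd_def, map_sub e]
      abel
    rwa [hCeq] at hsub
  -- explicit affine formula for the minimizer
  have key : ∀ ε : ℝ, ubar (φ t + ε • ψ) = u t + ε • d := by
    intro ε
    refine uniq (φ t + ε • ψ) _ _ (hubar_mem _) ?_ (hubar_weak _) ?_
    · have : (u t + ε • d) - g = (u t - g) + ε • d := by abel
      rw [this]
      exact V.add_mem (hu_mem t htIcc) (V.smul_mem ε hd_mem)
    · intro v hv
      have hCeq : e (u t + ε • d) - (φ t + ε • ψ)
          = (e (u t) - φ t) + ε • (e d - ψ) := by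
        rw [map_add e, map_smul e, smul_sub]
        abel
      rw [hCeq, map_add, map_smul, inner_add_left, real_inner_smul_left,
        heq1 t ht v hv, hd_weak v hv, mul_zero, add_zero]
  set A : Ψ := e (u t) - φ t with hA_def
  set B : Ψ := e d - ψ with hB_def
  -- explicit formula for the reduced energy along the line
  have hfun : (fun ε : ℝ => Etstar (φ t + ε • ψ)) = fun ε : ℝ =>
      (1 / 2) * ⟪C (A + ε • B), A + ε • B⟫
        + ((α - 1) / 2) * ⟪C (φ t + ε • ψ), φ t + ε • ψ⟫
        - (ℓ (u t) + ε * ℓ d) := by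
    funext ε
    rw [hEtstar, key ε, hEt]
    have hCeq : e (u t + ε • d) - (φ t + ε • ψ) = A + ε • B := by
      rw [hA_def, hB_def, map_add e, map_smul e, smul_sub]
      abel
    rw [hCeq]
    simp [map_add, map_smul]
  rw [hfun]
  -- differentiate
  have hg1 : HasDerivAt (fun ε : ℝ => A + ε • B) B 0 := by
    simpa using ((hasDerivAt_id (0 : ℝ)).smul_const B).const_add A
  have hg2 : HasDerivAt (fun ε : ℝ => φ t + ε • ψ) ψ 0 := by
    simpa using ((hasDerivAt_id (0 : ℝ)).smul_const ψ).const_add (φ t)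
  have hCg1 : HasDerivAt (fun ε : ℝ => C (A + ε • B)) (C B) 0 :=
    (C.hasFDerivAt.comp_hasDerivAt 0 hg1)
  have hCg2 : HasDerivAt (fun ε : ℝ => C (φ t + ε • ψ)) (C ψ) 0 :=
    (C.hasFDerivAt.comp_hasDerivAt 0 hg2)
  have ht1 : HasDerivAt (fun ε : ℝ => ⟪C (A + ε • B), A + ε • B⟫)
      (⟪C (A + (0:ℝ) • B), B⟫ + ⟪C B, A + (0:ℝ) • B⟫) 0 := hCg1.inner ℝ hg1
  have ht2 : HasDerivAt (fun ε : ℝ => ⟪C (φ t + ε • ψ), φ t + ε • ψ⟫)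
      (⟪C (φ t + (0:ℝ) • ψ), ψ⟫ + ⟪C ψ, φ t + (0:ℝ) • ψ⟫) 0 := hCg2.inner ℝ hg2
  have ht3 : HasDerivAt (fun ε : ℝ => ℓ (u t) + ε * ℓ d) (ℓ d) 0 := by
    simpa using ((hasDerivAt_id (0 : ℝ)).mul_const (ℓ d)).const_add (ℓ (u t))
  have hD : HasDerivAt (fun ε : ℝ =>
      (1 / 2) * ⟪C (A + ε • B), A + ε • B⟫
        + ((α - 1) / 2) * ⟪C (φ t + ε • ψ), φ t + ε • ψ⟫
        - (ℓ (u t) + ε * ℓ d))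
      ((1 / 2) * (⟪C (A + (0:ℝ) • B), B⟫ + ⟪C B, A + (0:ℝ) • B⟫)
        + ((α - 1) / 2) * (⟪C (φ t + (0:ℝ) • ψ), ψ⟫ + ⟪C ψ, φ t + (0:ℝ) • ψ⟫)
        - ℓ d) 0 := ((ht1.const_mul _).add (ht2.const_mul _)).sub ht3
  -- identify the derivative value
  convert hD using 1
  simp only [zero_smul, add_zero]
  have hsym1 : ⟪C B, A⟫ = ⟪C A, B⟫ := by rw [hCsym, real_inner_comm]
  have hsym2 : ⟪C ψ, φ t⟫ = ⟪C (φ t), ψ⟫ := by rw [hCsym, real_inner_comm]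
  have hAd : ⟪C A, e d⟫ = ℓ d := heq1 t ht d hd_mem
  have hAψ : ⟪C A, ψ⟫ = ⟪C (φ' t), ψ⟫ + (α - 1) * ⟪C (φ t), ψ⟫ := by
    have hA' : A = φ' t + (α - 1) • φ t := by
      rw [hA_def, ← heq2 t ht, sub_smul, one_smul]
      abel
    rw [hA', map_add, map_smul, inner_add_left, real_inner_smul_left]
  have hAB : ⟪C A, B⟫ = ℓ d - ⟪C A, ψ⟫ := by
    rw [hB_def, inner_sub_right, hAd]
  rw [hsym1, hsym2, hAB, hAψ]
  ring
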